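/- Let y be a Gaussian random variable with mean 0 and variance δ² > 0, and let s = Σ_{i=0}^{m} i · 1_{C_i < y ≤ C_{i+1}} be its quantized observation with thresholds -∞ = C_0 < C_1 < ... < C_m < C_{m+1} = ∞. Then E[s·y] = (δ/√(2π)) · Σ_{i=1}^{m} exp(-C_i²/(2δ²)). -/

import Mathlib

open MeasureTheory ProbabilityTheory Real Set Filter

/-- The quantizer with thresholds `C 1 < C 2 < ... < C m` (and `C 0 = -∞`,
`C (m+1) = +∞` by convention): `quantize m C x = i` iff `C i < x ≤ C (i+1)`. -/
noncomputable def quantize (m : ℕ) (C : ℕ → ℝ) (x : ℝ) : ℕ :=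
  ∑ i ∈ Finset.range (m + 1),
    i * (if (i = 0 ∨ C i < x) ∧ (i = m ∨ x ≤ C (i + 1)) then 1 else 0)

lemma quantize_eq (m : ℕ) (C : ℕ → ℝ)
    (hC : ∀ i j, 1 ≤ i → i < j → j ≤ m → C i < C j) (x : ℝ) :
    (quantize m C x : ℝ) = ∑ i ∈ Finset.Icc 1 m, (if C i < x then (1:ℝ) else 0) := by
  classical
  set S : Finset ℕ := (Finset.Icc 1 m).filter (fun i => C i < x) with hS
  set k : ℕ := S.card with hk
  have hCle : ∀ i j, 1 ≤ i → i ≤ j → j ≤ m → C i ≤ C j := by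
    intro i j h1 hij hjm
    rcases eq_or_lt_of_le hij with rfl | h
    · exact le_rfl
    · exact (hC i j h1 h hjm).le
  have hkm : k ≤ m := by
    calc k ≤ (Finset.Icc 1 m).card := Finset.card_filter_le _ _
    _ = m := by simp
  have hiff : ∀ i, 1 ≤ i → i ≤ m → (C i < x ↔ i ≤ k) := by
    intro i h1 him
    constructor
    · intro hx
      have hsub : Finset.Icc 1 i ⊆ S := by
        intro j hj
        simp only [Finset.mem_Icc] at hj
        simp only [hS, Finset.mem_filter, Finset.mem_Icc]
        exact ⟨⟨hj.1, hj.2.trans him⟩, lt_of_le_of_lt (hCle j i hj.1 hj.2 him) hx⟩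
      have := Finset.card_le_card hsub
      simpa using this
    · intro hik
      by_contra hx
      push_neg at hx
      have hsub : S ⊆ Finset.Icc 1 (i - 1) := by
        intro j hj
        simp only [hS, Finset.mem_filter, Finset.mem_Icc] at hj
        simp only [Finset.mem_Icc]
        refine ⟨hj.1.1, ?_⟩
        by_contra hji
        push_neg at hji
        have hij : i ≤ j := by omega
        exact absurd (lt_of_le_of_lt (hCle i j h1 hij hj.1.2) hj.2) (not_lt.2 hx)
      have := Finset.card_le_card hsub
      simp only [Nat.card_Icc] at this
      omega
  have hquant : quantize m C x = k := by
    unfold quantize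
    rw [Finset.sum_eq_single_of_mem k (by simp [Finset.mem_range]; omega)]
    · have h1 : (k = 0 ∨ C k < x) := by
        rcases Nat.eq_zero_or_pos k with h | h
        · exact Or.inl h
        · exact Or.inr ((hiff k h hkm).2 le_rfl)
      have h2 : (k = m ∨ x ≤ C (k + 1)) := by
        rcases eq_or_lt_of_le hkm with h | h
        · exact Or.inl h
        · refine Or.inr (not_lt.1 fun hx => ?_)
          have := (hiff (k+1) (by omega) (by omega)).1 hx
          omega
      simp [h1, h2]
    · intro i hi hik
      rcases Nat.eq_zero_or_pos i with rfl | hi1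
      · simp
      have : ¬ ((i = 0 ∨ C i < x) ∧ (i = m ∨ x ≤ C (i + 1))) := by
        rintro ⟨ha, hb⟩
        simp only [Finset.mem_range] at hi
        have him : i ≤ m := by omega
        have hCi : C i < x := by
          rcases ha with h | h
          · omega
          · exact h
        have hikle : i ≤ k := (hiff i hi1 him).1 hCi
        have hiltk : i < k := by omega
        have hnm : i ≠ m := by omega
        have hxle : x ≤ C (i + 1) := by
          rcases hb with h | h
          · omega
          · exact h
        have : C (i+1) < x := (hiff (i+1) (by omega) (by omega)).2 (by omega)
        linarith
      simp [this]
  rw [hquant]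
  rw [Finset.sum_boole, hk, hS]

lemma tail_int (δ : ℝ) (hδ : 0 < δ) (c : ℝ) :
    ∫ x in Set.Ioi c, x * Real.exp (-(1/(2*δ^2)) * x^2)
      = δ^2 * Real.exp (-(1/(2*δ^2)) * c^2) := by
  have hb : 0 < 1/(2*δ^2) := by positivity
  set b : ℝ := 1/(2*δ^2) with hbdef
  have hderiv : ∀ x ∈ Set.Ici c, HasDerivAt (fun x => -δ^2 * Real.exp (-b*x^2))
      (x * Real.exp (-b*x^2)) x := by
    intro x _
    have h1 : HasDerivAt (fun x : ℝ => -b*x^2) (-b*(2*x)) x := by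
      simpa using (hasDerivAt_pow 2 x).const_mul (-b)
    have h2 := (h1.exp).const_mul (-δ^2)
    refine h2.congr_deriv ?_
    rw [hbdef]
    field_simp
  have hint : IntegrableOn (fun x => x * Real.exp (-b*x^2)) (Set.Ioi c) :=
    (integrable_mul_exp_neg_mul_sq hb).integrableOn
  have htend : Tendsto (fun x => -δ^2 * Real.exp (-b*x^2)) atTop (nhds 0) := by
    have h1 : Tendsto (fun x : ℝ => b * x^2) atTop atTop :=
      (tendsto_pow_atTop (by norm_num)).const_mul_atTop hb
    have h2 : Tendsto (fun x : ℝ => Real.exp (-b*x^2)) atTop (nhds 0) := by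
      have := (Real.tendsto_exp_atTop.comp h1).inv_tendsto_atTop
      refine this.congr fun x => ?_
      simp [Real.exp_neg, neg_mul]
    have := h2.const_mul (-δ^2)
    simpa using this
  have := MeasureTheory.integral_Ioi_of_hasDerivAt_of_tendsto' hderiv hint htend
  rw [this]
  ring

lemma pdf_mul (δ : ℝ) (hδ : 0 < δ) : ∀ x : ℝ,
    gaussianPDFReal 0 (Real.toNNReal (δ^2)) x * x
      = (Real.sqrt (2*π) * δ)⁻¹ * (x * Real.exp (-(1/(2*δ^2)) * x^2)) := by
  have hcoe : (Real.toNNReal (δ^2) : ℝ) = δ^2 :=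
    Real.coe_toNNReal _ (sq_nonneg δ)
  intro x
  have hd : δ ≠ 0 := hδ.ne'
  rw [gaussianPDFReal, hcoe, Real.sqrt_mul (by positivity : (0:ℝ) ≤ 2 * π),
    Real.sqrt_sq hδ.le, show -(x-(0:ℝ))^2/(2*δ^2) = -(1/(2*δ^2))*x^2 by
      field_simp; ring]
  ring

lemma gauss_tail (δ : ℝ) (hδ : 0 < δ) (c : ℝ) :
    ∫ x in Set.Ioi c, gaussianPDFReal 0 (Real.toNNReal (δ^2)) x * x
      = δ / Real.sqrt (2*π) * Real.exp (-c^2 / (2*δ^2)) := by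
  simp_rw [pdf_mul δ hδ]
  rw [MeasureTheory.integral_const_mul, tail_int δ hδ c]
  have hs : Real.sqrt (2*π) > 0 := by positivity
  field_simp


lemma pdf_mul_integrable (δ : ℝ) (hδ : 0 < δ) :
    Integrable (fun x : ℝ => gaussianPDFReal 0 (Real.toNNReal (δ^2)) x * x) := by
  have hb : 0 < 1/(2*δ^2) := by positivity
  have := (integrable_mul_exp_neg_mul_sq hb).const_mul ((Real.sqrt (2*π) * δ)⁻¹)
  exact this.congr (Filter.Eventually.of_forall fun x => (pdf_mul δ hδ x).symm)


/-- If `y ~ N(0, δ²)` and `s = Q(y)` is its quantized observation, then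
`E[s·y] = (δ/√(2π)) · Σ_{i=1}^m exp(-C_i²/(2δ²))`. -/
theorem stmt_1 (m : ℕ) (hm : 1 ≤ m) (C : ℕ → ℝ)
    (hC : ∀ i j, 1 ≤ i → i < j → j ≤ m → C i < C j)
    (δ : ℝ) (hδ : 0 < δ) :
    ∫ x, (quantize m C x : ℝ) * x ∂(gaussianReal 0 (Real.toNNReal (δ ^ 2)))
      = δ / Real.sqrt (2 * π)
        * ∑ i ∈ Finset.Icc 1 m, Real.exp (-(C i) ^ 2 / (2 * δ ^ 2)) := by
  classical
  have hv : Real.toNNReal (δ ^ 2) ≠ 0 := by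
    rw [Ne, Real.toNNReal_eq_zero, not_le]
    positivity
  set v := Real.toNNReal (δ ^ 2) with hvdef
  rw [gaussianReal_of_var_ne_zero 0 hv]
  have hmeas : Measurable fun x => (gaussianPDFReal 0 v x).toNNReal :=
    (measurable_gaussianPDFReal 0 v).real_toNNReal
  have hwd : volume.withDensity (gaussianPDF 0 v)
      = volume.withDensity (fun x => ((gaussianPDFReal 0 v x).toNNReal : ENNReal)) := rfl
  rw [hwd, integral_withDensity_eq_integral_smul hmeas]
  have hintegrand : ∀ x, ((gaussianPDFReal 0 v x).toNNReal) • ((quantize m C x : ℝ) * x)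
      = ∑ i ∈ Finset.Icc 1 m,
          (Set.Ioi (C i)).indicator (fun y => gaussianPDFReal 0 v y * y) x := by
    intro x
    rw [NNReal.smul_def, Real.coe_toNNReal _ (gaussianPDFReal_nonneg 0 v x),
      quantize_eq m C hC x, smul_eq_mul, Finset.sum_mul, Finset.mul_sum]
    refine Finset.sum_congr rfl fun i _ => ?_
    by_cases h : C i < x
    · rw [Set.indicator_of_mem (Set.mem_Ioi.2 h), if_pos h]
      ring
    · rw [Set.indicator_of_notMem (by simpa using h), if_neg h]
      ring
  simp_rw [hintegrand]
  rw [MeasureTheory.integral_finset_sum]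
  · have heach : ∀ i ∈ Finset.Icc 1 m,
        ∫ x, (Set.Ioi (C i)).indicator (fun y => gaussianPDFReal 0 v y * y) x
          = δ / Real.sqrt (2*π) * Real.exp (-(C i)^2 / (2*δ^2)) := by
      intro i _
      rw [MeasureTheory.integral_indicator measurableSet_Ioi]
      exact gauss_tail δ hδ (C i)
    rw [Finset.sum_congr rfl heach, ← Finset.mul_sum]
  · intro i _
    rw [MeasureTheory.integrable_indicator_iff measurableSet_Ioi]
    exact (pdf_mul_integrable δ hδ).integrableOn
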